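/- Let Q be a polynomial with real coefficients, evaluated at complex arguments via its coefficients, let Q′ be its derivative polynomial, and let λ ∈ ℂ. Suppose x, y, z : ℝ → ℂ satisfy, for all s ∈ ℝ: x′(s) = Q(x(s)), y′(s) = λ·z(s) − (1/2)·Q′(x(s))·y(s), and z′(s) = −λ·y(s) − (1/2)·Q′(x(s))·z(s). Then the function s ↦ Q(x(s))·(y(s)² + z(s)²) is constant on ℝ. -/

import Mathlib

open Polynomial

/-- If `x, y, z : ℝ → ℂ` satisfy `x' = Q(x)`,
`y' = λ z - (1/2) Q'(x) y` and `z' = -λ y - (1/2) Q'(x) z` with `Q` a real polynomial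
(evaluated on `ℂ`) and `λ ∈ ℂ`, then `s ↦ Q(x s)·(y s² + z s²)` is constant. -/
theorem zeroHopf_conservation_real_time
    (Q : Polynomial ℝ) (lam : ℂ) (x y z : ℝ → ℂ)
    (hx : ∀ s : ℝ, HasDerivAt x ((Polynomial.aeval (x s)) Q) s)
    (hy : ∀ s : ℝ, HasDerivAt y
      (lam * z s - (1 / 2) * (Polynomial.aeval (x s)) Q.derivative * y s) s)
    (hz : ∀ s : ℝ, HasDerivAt z
      (-(lam * y s) - (1 / 2) * (Polynomial.aeval (x s)) Q.derivative * z s) s) :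
    ∀ s t : ℝ,
      (Polynomial.aeval (x s)) Q * (y s ^ 2 + z s ^ 2) =
        (Polynomial.aeval (x t)) Q * (y t ^ 2 + z t ^ 2) := by
  set P : Polynomial ℂ := Q.map (algebraMap ℝ ℂ) with hP
  have haev : ∀ w : ℂ, (Polynomial.aeval w) Q = P.eval w := by
    intro w; rw [Polynomial.aeval_def, Polynomial.eval₂_eq_eval_map]
  have haev' : ∀ w : ℂ, (Polynomial.aeval w) Q.derivative = P.derivative.eval w := by
    intro w
    rw [Polynomial.aeval_def, Polynomial.eval₂_eq_eval_map, ← Polynomial.derivative_map]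
  have key : ∀ s : ℝ, HasDerivAt (fun s => (Polynomial.aeval (x s)) Q * (y s ^ 2 + z s ^ 2)) 0 s := by
    intro s
    have hQx : HasDerivAt (fun s => (Polynomial.aeval (x s)) Q)
        (P.derivative.eval (x s) * P.eval (x s)) s := by
      simp only [haev]
      have := (P.hasDerivAt (x s)).comp s (by simpa [haev] using hx s)
      simpa [haev, Function.comp_def] using this
    have h := (hQx.mul (((hy s).mul (hy s)).add ((hz s).mul (hz s))))
    have h2 : HasDerivAt (fun s => (Polynomial.aeval (x s)) Q * (y s ^ 2 + z s ^ 2))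
        (P.derivative.eval (x s) * P.eval (x s) * (y s * y s + z s * z s) +
          P.eval (x s) *
            (((lam * z s - 1 / 2 * (Polynomial.aeval (x s)) Q.derivative * y s) * y s +
                y s * (lam * z s - 1 / 2 * (Polynomial.aeval (x s)) Q.derivative * y s)) +
              ((-(lam * y s) - 1 / 2 * (Polynomial.aeval (x s)) Q.derivative * z s) * z s +
                z s * (-(lam * y s) - 1 / 2 * (Polynomial.aeval (x s)) Q.derivative * z s))))
        s := by
      simpa [sq, haev, Pi.mul_def, Pi.add_def] using h
    convert h2 using 1
    simp only [haev, haev']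
    ring
  intro s t
  have : ∀ u v : ℝ, u ≤ v → (Polynomial.aeval (x u)) Q * (y u ^ 2 + z u ^ 2) =
      (Polynomial.aeval (x v)) Q * (y v ^ 2 + z v ^ 2) := by
    intro u v huv
    have := constant_of_has_deriv_right_zero (f := fun s => (Polynomial.aeval (x s)) Q * (y s ^ 2 + z s ^ 2)) (a := u) (b := v)
      (fun w _ => ((key w).continuousAt.continuousWithinAt))
      (fun w _ => ((key w).hasDerivWithinAt))
    exact (this v (by simp [huv])).symm
  rcases le_total s t with h | h
  · exact this s t h
  · exact (this t s h).symm
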